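/- Let d ≥ 1 and let g : ℝ^d → ℝ be convex (hence continuous) and strictly convex along zero-sum directions, i.e., for all m₁ ≠ m₂ ∈ ℝ^d with Σ_{k=1}^d (m₁ − m₂)_k = 0 one has g((m₁ + m₂)/2) < (g(m₁) + g(m₂))/2. Suppose m₁* and m₂* both attain the minimum of m ↦ Σ_{k=1}^d m_k over the acceptance set A := {m ∈ ℝ^d : g(m) ≤ 0}; that is, g(m₁*) ≤ 0, g(m₂*) ≤ 0, and Σ_k (m₁*)_k = Σ_k (m₂*)_k = inf{Σ_k m_k : g(m) ≤ 0}. Then m₁* = m₂*. -/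
import Mathlib


/-- Uniqueness of the optimal risk allocation: if the constraint function `g` is convex
and strictly convex along zero-sum directions, then the minimizer of the total capital
`m ↦ ∑ k, m k` over the acceptance set `A = {m : g m ≤ 0}` is unique.  "Both attain the
infimum of the total capital over `A`" is expressed by membership in `A`, equality of
the two total capitals, and minimality of each among all elements of `A`. -/
theorem stmt_16 (d : ℕ) (hd : 1 ≤ d)
    (g : EuclideanSpace ℝ (Fin d) → ℝ)
    (hconv : ConvexOn ℝ Set.univ g)
    (hstrict : ∀ m₁ m₂ : EuclideanSpace ℝ (Fin d), m₁ ≠ m₂ →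
      (∑ k, (m₁ - m₂) k) = 0 →
      g (((1 : ℝ) / 2) • (m₁ + m₂)) < (g m₁ + g m₂) / 2)
    (mstar₁ mstar₂ : EuclideanSpace ℝ (Fin d))
    (hm₁ : g mstar₁ ≤ 0) (hm₂ : g mstar₂ ≤ 0)
    (hsum : (∑ k, mstar₁ k) = ∑ k, mstar₂ k)
    (hmin₁ : ∀ m : EuclideanSpace ℝ (Fin d), g m ≤ 0 → (∑ k, mstar₁ k) ≤ ∑ k, m k)
    (hmin₂ : ∀ m : EuclideanSpace ℝ (Fin d), g m ≤ 0 → (∑ k, mstar₂ k) ≤ ∑ k, m k) :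
    mstar₁ = mstar₂ := by
  by_contra hne
  -- the midpoint
  set m : EuclideanSpace ℝ (Fin d) := ((1 : ℝ) / 2) • (mstar₁ + mstar₂) with hmdef
  have hzero : (∑ k, (mstar₁ - mstar₂) k) = 0 := by
    simp only [PiLp.sub_apply, Finset.sum_sub_distrib]
    linarith
  have hgm : g m < 0 := by
    have := hstrict mstar₁ mstar₂ hne hzero
    linarith
  have hsumm : (∑ k, m k) = ∑ k, mstar₁ k := by
    simp only [hmdef, PiLp.smul_apply, PiLp.add_apply, smul_eq_mul, ← Finset.sum_add_distrib]
    rw [← Finset.mul_sum]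
    have : (∑ k, (mstar₁ k + mstar₂ k)) = (∑ k, mstar₁ k) + ∑ k, mstar₂ k :=
      Finset.sum_add_distrib
    rw [this, ← hsum]; ring
  -- continuity of g at m
  have hcont : ContinuousAt g m := by
    have := hconv.continuousOn isOpen_univ
    exact (this m (Set.mem_univ m)).continuousAt (isOpen_univ.mem_nhds (Set.mem_univ m))
  have hev : ∀ᶠ x in nhds m, g x < 0 := hcont.eventually_lt continuousAt_const hgm
  obtain ⟨δ, hδ, hball⟩ := Metric.eventually_nhds_iff_ball.mp hev
  -- perturb m in the direction of a single coordinate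
  have i0 : Fin d := ⟨0, hd⟩
  set v : EuclideanSpace ℝ (Fin d) := EuclideanSpace.single i0 (1 : ℝ) with hvdef
  set m' : EuclideanSpace ℝ (Fin d) := m - (δ / 2) • v with hm'def
  have hdist : dist m' m < δ := by
    have : m' - m = -((δ / 2) • v) := by simp [hm'def]
    rw [dist_eq_norm, this, norm_neg, norm_smul, hvdef, EuclideanSpace.norm_single]
    rw [Real.norm_eq_abs, norm_one, mul_one, abs_of_pos (by linarith : (0:ℝ) < δ/2)]
    linarith
  have hgm' : g m' < 0 := hball m' (Metric.mem_ball.mpr hdist)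
  have hsumm' : (∑ k, m' k) = (∑ k, m k) - δ / 2 := by
    simp only [hm'def, PiLp.sub_apply, PiLp.smul_apply, smul_eq_mul, Finset.sum_sub_distrib,
      ← Finset.mul_sum, hvdef]
    have : (∑ k, (EuclideanSpace.single i0 (1 : ℝ)) k) = 1 := by
      simp [EuclideanSpace.single_apply]
    rw [this, mul_one]
  have := hmin₁ m' (le_of_lt hgm')
  rw [hsumm', hsumm] at this
  linarith
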